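/- The gradient of J(a) = (λ/2)∫₀¹ a(t)² dt + (1/2)∫_Ω (u(x,1) − O(x))² dΩ, where u depends on the control a through a linear ODE du/dt = a(t)·g(x) with u(x,0) = f(x), is given by ∂J/∂a(t) = λ a(t) − ∫_Ω φ(x,t) g(x) dΩ, where φ solves the adjoint equation ∂φ/∂t = 0 backward from φ(x,1) = O(x) − u(x,1). -/

import Mathlib

open MeasureTheory

lemma memL2_integrable_mul {α : Type*} [MeasurableSpace α] {μ : Measure α}
    {f g : α → ℝ} (hf : MemLp f 2 μ) (hg : MemLp g 2 μ) :
    Integrable (fun x => f x * g x) μ := by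
  have h : MemLp (f • g) 1 μ := hg.smul hf
  exact memLp_one_iff_integrable.mp h

/-- for the scalar-control problem with state
`u_b(x) = f(x) + (∫₀¹ b(t) dt) g(x)` and objective
`J(b) = (λ/2)∫₀¹ b(t)² dt + (1/2)∫ (u_b(x) − O(x))² dμ`,
the Gâteaux derivative of `J` at `a` in direction `δ` is
`∫₀¹ (λ a(t) − ∫ φ(x) g(x) dμ) δ(t) dt`, where the adjoint state is
`φ(x) = O(x) − u_a(x)` (constant in time, as the adjoint equation is `∂φ/∂t = 0`
backward from `φ|_{t=1} = O − u_a(·,1)`). -/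
theorem gateaux_derivative_of_control_objective
    {α : Type*} [MeasurableSpace α] (μ : Measure α) [IsFiniteMeasure μ]
    (lam : ℝ) (hlam : 0 < lam)
    (a δ : ℝ → ℝ) (ha : Continuous a) (hδ : Continuous δ)
    (f g O : α → ℝ) (hf : MemLp f 2 μ) (hg : MemLp g 2 μ) (hO : MemLp O 2 μ) :
    let u : (ℝ → ℝ) → α → ℝ := fun b x => f x + (∫ t in (0:ℝ)..1, b t) * g x
    let J : (ℝ → ℝ) → ℝ := fun b =>
      lam / 2 * (∫ t in (0:ℝ)..1, (b t) ^ 2) + 1 / 2 * ∫ x, (u b x - O x) ^ 2 ∂μ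
    let φ : α → ℝ := fun x => O x - u a x
    HasDerivAt (fun s : ℝ => J (fun t => a t + s * δ t))
      (∫ t in (0:ℝ)..1, (lam * a t - ∫ x, φ x * g x ∂μ) * δ t) 0 := by
  intro u J φ
  set A : ℝ := ∫ t in (0:ℝ)..1, a t with hA
  set D : ℝ := ∫ t in (0:ℝ)..1, δ t with hD
  set c : α → ℝ := fun x => f x + A * g x - O x with hcdef
  have hc : MemLp c 2 μ := (hf.add (hg.const_mul A)).sub hO
  set Ia2 : ℝ := ∫ t in (0:ℝ)..1, (a t) ^ 2 with hIa2
  set Iad : ℝ := ∫ t in (0:ℝ)..1, a t * δ t with hIad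
  set Id2 : ℝ := ∫ t in (0:ℝ)..1, (δ t) ^ 2 with hId2
  set Ic2 : ℝ := ∫ x, (c x) ^ 2 ∂μ with hIc2
  set Icg : ℝ := ∫ x, c x * g x ∂μ with hIcg
  set Ig2 : ℝ := ∫ x, (g x) ^ 2 ∂μ with hIg2
  -- integrabilities
  have hia : IntervalIntegrable (fun t => (a t) ^ 2) MeasureTheory.volume 0 1 :=
    (ha.pow 2).intervalIntegrable 0 1
  have hid : IntervalIntegrable (fun t => (δ t) ^ 2) MeasureTheory.volume 0 1 :=
    (hδ.pow 2).intervalIntegrable 0 1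
  have hiad : IntervalIntegrable (fun t => a t * δ t) MeasureTheory.volume 0 1 :=
    (ha.mul hδ).intervalIntegrable 0 1
  have hc2 : Integrable (fun x => (c x) ^ 2) μ := hc.integrable_sq
  have hcg : Integrable (fun x => c x * g x) μ := memL2_integrable_mul hc hg
  have hg2 : Integrable (fun x => (g x) ^ 2) μ := hg.integrable_sq
  -- the objective along the line is a quadratic polynomial in `s`
  have key : ∀ s : ℝ, J (fun t => a t + s * δ t) =
      (lam / 2 * Ia2 + 1 / 2 * Ic2) + s * (lam * Iad + D * Icg)
        + s ^ 2 * (lam / 2 * Id2 + 1 / 2 * D ^ 2 * Ig2) := by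
    intro s
    have h1 : (∫ t in (0:ℝ)..1, (a t + s * δ t) ^ 2)
        = Ia2 + s * (2 * Iad) + s ^ 2 * Id2 := by
      have e : ∀ t, (a t + s * δ t) ^ 2
          = (a t) ^ 2 + (2 * s) * (a t * δ t) + s ^ 2 * (δ t) ^ 2 := by
        intro t; ring
      rw [intervalIntegral.integral_congr (g := fun t =>
        (a t) ^ 2 + ((2 * s) * (a t * δ t) + s ^ 2 * (δ t) ^ 2))
        (fun t _ => by rw [e t]; ring)]
      rw [intervalIntegral.integral_add hia
          ((hiad.const_mul (2 * s)).add (hid.const_mul (s ^ 2))),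
        intervalIntegral.integral_add (hiad.const_mul (2 * s)) (hid.const_mul (s ^ 2)),
        intervalIntegral.integral_const_mul, intervalIntegral.integral_const_mul]
      simp only [← hIa2, ← hIad, ← hId2]; ring
    have h2 : (∫ t in (0:ℝ)..1, (a t + s * δ t)) = A + s * D := by
      rw [intervalIntegral.integral_add (ha.intervalIntegrable 0 1)
          (show IntervalIntegrable (fun t => s * δ t) volume 0 1 from
            (continuous_const.mul hδ).intervalIntegrable 0 1),
        intervalIntegral.integral_const_mul]
    have h3 : (∫ x, (u (fun t => a t + s * δ t) x - O x) ^ 2 ∂μ)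
        = Ic2 + (2 * (s * D)) * Icg + (s * D) ^ 2 * Ig2 := by
      have e : ∀ x, (u (fun t => a t + s * δ t) x - O x) ^ 2
          = (c x) ^ 2 + ((2 * (s * D)) * (c x * g x) + (s * D) ^ 2 * (g x) ^ 2) := by
        intro x
        show (f x + (∫ t in (0:ℝ)..1, (a t + s * δ t)) * g x - O x) ^ 2 = _
        rw [h2, hcdef]; ring
      have hsum : Integrable (fun x => (2 * (s * D)) * (c x * g x)
          + (s * D) ^ 2 * (g x) ^ 2) μ :=
        (hcg.const_mul _).add (hg2.const_mul _)
      rw [integral_congr_ae (Filter.Eventually.of_forall e),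
        integral_add hc2 hsum,
        integral_add (hcg.const_mul (2 * (s * D))) (hg2.const_mul ((s * D) ^ 2)),
        integral_const_mul, integral_const_mul]
      simp only [← hIc2, ← hIcg, ← hIg2]; ring
    show lam / 2 * (∫ t in (0:ℝ)..1, (a t + s * δ t) ^ 2)
        + 1 / 2 * (∫ x, (u (fun t => a t + s * δ t) x - O x) ^ 2 ∂μ) = _
    rw [h1, h3]; ring
  -- the derivative value matches
  have hφg : (∫ x, φ x * g x ∂μ) = -Icg := by
    have e : ∀ x, φ x * g x = -(c x * g x) := by
      intro x
      show (O x - (f x + A * g x)) * g x = -((f x + A * g x - O x) * g x)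
      ring
    rw [integral_congr_ae (Filter.Eventually.of_forall e), integral_neg]
  have hval : (∫ t in (0:ℝ)..1, (lam * a t - ∫ x, φ x * g x ∂μ) * δ t)
      = lam * Iad + D * Icg := by
    rw [hφg]
    have e : ∀ t, (lam * a t - -Icg) * δ t = lam * (a t * δ t) + Icg * δ t := by
      intro t; ring
    rw [intervalIntegral.integral_congr (fun t _ => e t),
      intervalIntegral.integral_add (hiad.const_mul lam)
        (show IntervalIntegrable (fun t => Icg * δ t) volume 0 1 from
          (continuous_const.mul hδ).intervalIntegrable 0 1),
      intervalIntegral.integral_const_mul, intervalIntegral.integral_const_mul]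
    ring
  rw [hval]
  have hp : HasDerivAt (fun s : ℝ =>
      (lam / 2 * Ia2 + 1 / 2 * Ic2) + s * (lam * Iad + D * Icg)
        + s ^ 2 * (lam / 2 * Id2 + 1 / 2 * D ^ 2 * Ig2)) (lam * Iad + D * Icg) 0 := by
    have h1 : HasDerivAt (fun s : ℝ => s * (lam * Iad + D * Icg))
        (lam * Iad + D * Icg) 0 := by
      simpa using (hasDerivAt_id (0:ℝ)).mul_const (lam * Iad + D * Icg)
    have h2 : HasDerivAt (fun s : ℝ => s ^ 2 * (lam / 2 * Id2 + 1 / 2 * D ^ 2 * Ig2))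
        0 0 := by
      simpa using (hasDerivAt_pow 2 (0:ℝ)).mul_const (lam / 2 * Id2 + 1 / 2 * D ^ 2 * Ig2)
    have := ((hasDerivAt_const (0:ℝ) (lam / 2 * Ia2 + 1 / 2 * Ic2)).add h1).add h2
    simp only [zero_add, add_zero] at this
    exact this
  have heq : (fun s : ℝ => J (fun t => a t + s * δ t))
      = fun s : ℝ => (lam / 2 * Ia2 + 1 / 2 * Ic2) + s * (lam * Iad + D * Icg)
        + s ^ 2 * (lam / 2 * Id2 + 1 / 2 * D ^ 2 * Ig2) := funext key
  rw [heq]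
  exact hp
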